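/- Let r > 0 and p, q ∈ ℝ^d. If the shift t is drawn uniformly at random from [0, r)^d, then the probability that there exists a coordinate i ∈ {1, …, d} with ⌊(p_i - t_i)/r⌋ ≠ ⌊(q_i - t_i)/r⌋ is at most √d · ‖p - q‖₂ / r. -/

import Mathlib

open MeasureTheory


lemma bad_subset {r a b : ℝ} (hr : 0 < r) (hab : a ≤ b) (hd : b - a < r) :
    {s : ℝ | ⌊(a - s)/r⌋ ≠ ⌊(b - s)/r⌋} ∩ Set.Ico 0 r ⊆
      Set.Icc (max (b - ⌊b/r⌋ * r - (b-a)) 0) (b - ⌊b/r⌋ * r) ∪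
      Set.Ico (b - ⌊b/r⌋ * r + r - (b-a)) r := by
  rintro s ⟨hbad, hs0, hsr⟩
  have hle : ⌊(a - s)/r⌋ ≤ ⌊(b - s)/r⌋ := Int.floor_le_floor (by gcongr <;> linarith)
  have hlt : ⌊(a - s)/r⌋ < ⌊(b - s)/r⌋ := lt_of_le_of_ne hle hbad
  set k := ⌊(b - s)/r⌋ with hk
  have h1 : (k : ℝ) * r ≤ b - s := by
    have := Int.floor_le ((b - s)/r)
    calc (k:ℝ) * r ≤ ((b-s)/r) * r := by gcongr
      _ = b - s := div_mul_cancel₀ _ hr.ne'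
  have h2 : a - s < (k : ℝ) * r := by
    have h3 : (a - s)/r < (k : ℝ) := by
      have := Int.lt_floor_add_one ((a - s)/r)
      have h4 : (⌊(a-s)/r⌋ : ℝ) + 1 ≤ (k : ℝ) := by exact_mod_cast hlt
      linarith
    calc a - s = ((a-s)/r) * r := (div_mul_cancel₀ _ hr.ne').symm
      _ < (k:ℝ) * r := by gcongr
  set K := ⌊b/r⌋ with hK
  have hKr : (K : ℝ) * r ≤ b := by
    have := Int.floor_le (b/r)
    calc (K:ℝ) * r ≤ (b/r) * r := by gcongr
      _ = b := div_mul_cancel₀ _ hr.ne'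
  have hkK : k ≤ K := by
    apply Int.le_floor.2
    rw [le_div_iff₀ hr]
    linarith
  have hkK' : K - 1 ≤ k := by
    have h5 : (K : ℝ) ≤ b/r := Int.floor_le _
    have h6 : b / r < (k : ℝ) + 2 := by
      rw [div_lt_iff₀ hr]
      nlinarith
    have : (K : ℝ) < (k : ℝ) + 2 := lt_of_le_of_lt h5 h6
    have : K < k + 2 := by exact_mod_cast this
    omega
  have hcase : k = K ∨ k = K - 1 := by omega
  rcases hcase with hc | hc
  · left
    rw [hc] at h1 h2
    exact ⟨max_le (by linarith) hs0, by linarith⟩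
  · right
    rw [hc] at h1 h2
    push_cast at h1 h2
    constructor <;> [linarith; linarith]

lemma oneD {r : ℝ} (hr : 0 < r) (a b : ℝ) (hab : a ≤ b) :
    volume ({s : ℝ | ⌊(a - s)/r⌋ ≠ ⌊(b - s)/r⌋} ∩ Set.Ico 0 r) ≤ ENNReal.ofReal (b - a) := by
  rcases le_or_gt r (b - a) with h | h
  · calc volume ({s : ℝ | ⌊(a - s)/r⌋ ≠ ⌊(b - s)/r⌋} ∩ Set.Ico 0 r)
        ≤ volume (Set.Ico (0:ℝ) r) := measure_mono Set.inter_subset_right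
      _ = ENNReal.ofReal r := by simp
      _ ≤ _ := ENNReal.ofReal_le_ofReal h
  · refine le_trans (measure_mono (bad_subset hr hab h)) ?_
    refine le_trans (measure_union_le _ _) ?_
    rw [Real.volume_Icc, Real.volume_Ico]
    set β := b - (⌊b/r⌋ : ℝ) * r with hβ
    have hβ0 : 0 ≤ β := by
      have : (⌊b/r⌋ : ℝ) * r ≤ b := by
        calc (⌊b/r⌋:ℝ) * r ≤ (b/r) * r := by gcongr; exact Int.floor_le _
          _ = b := div_mul_cancel₀ _ hr.ne'
      rw [hβ]; linarith
    rcases le_total (b - a) β with hc | hc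
    · have h1 : max (β - (b-a)) 0 = β - (b-a) := max_eq_left (by linarith)
      rw [h1]
      have h2 : ENNReal.ofReal (r - (β + r - (b-a))) = 0 := by
        rw [ENNReal.ofReal_eq_zero]; linarith
      rw [h2, add_zero]
      exact ENNReal.ofReal_le_ofReal (by linarith)
    · have h1 : max (β - (b-a)) 0 = 0 := max_eq_right (by linarith)
      rw [h1, sub_zero]
      rw [← ENNReal.ofReal_add hβ0 (by linarith)]
      exact ENNReal.ofReal_le_ofReal (by linarith)

lemma oneD' {r : ℝ} (hr : 0 < r) (a b : ℝ) :
    volume ({s : ℝ | ⌊(a - s)/r⌋ ≠ ⌊(b - s)/r⌋} ∩ Set.Ico 0 r) ≤ ENNReal.ofReal |a - b| := by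
  rcases le_total a b with h | h
  · rw [abs_of_nonpos (by linarith), neg_sub]
    exact oneD hr a b h
  · rw [abs_of_nonneg (by linarith)]
    have := oneD hr b a h
    convert this using 3
    ext s; simp [ne_comm]

lemma measurable_bad {r : ℝ} (a b : ℝ) :
    MeasurableSet {s : ℝ | ⌊(a - s)/r⌋ ≠ ⌊(b - s)/r⌋} := by
  have : {s : ℝ | ⌊(a - s)/r⌋ ≠ ⌊(b - s)/r⌋} = {s : ℝ | ⌊(a - s)/r⌋ = ⌊(b - s)/r⌋}ᶜ := by
    ext s; simp
  rw [this]
  exact (measurableSet_eq_fun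
    (Measurable.floor (by fun_prop)) (Measurable.floor (by fun_prop))).compl

/-- For `r > 0` and `p, q ∈ ℝ^d`, if the shift `t` is drawn uniformly at
random from `[0, r)^d`, the probability that some coordinate `i` satisfies
`⌊(p i - t i)/r⌋ ≠ ⌊(q i - t i)/r⌋` (i.e. the shifted grid separates `p` and `q`)
is at most `√d · ‖p - q‖₂ / r`. -/
theorem grid_separation_prob_le (d : ℕ) (r : ℝ) (hr : 0 < r)
    (p q : EuclideanSpace ℝ (Fin d)) :
    ((ENNReal.ofReal (r ^ d))⁻¹ •
        volume.restrict {t : EuclideanSpace ℝ (Fin d) | ∀ i, t i ∈ Set.Ico (0 : ℝ) r})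
      {t : EuclideanSpace ℝ (Fin d) | ∃ i, ⌊(p i - t i) / r⌋ ≠ ⌊(q i - t i) / r⌋}
      ≤ ENNReal.ofReal (Real.sqrt d * ‖p - q‖ / r) := by
  rcases Nat.eq_zero_or_pos d with hd | hd
  · subst hd
    have he : {t : EuclideanSpace ℝ (Fin 0) | ∃ i, ⌊(p i - t i) / r⌋ ≠ ⌊(q i - t i) / r⌋} = ∅ := by
      ext t; simp
    rw [he]
    simp
  -- notation
  set Bad1 : Fin d → Set ℝ := fun i => {s : ℝ | ⌊(p i - s)/r⌋ ≠ ⌊(q i - s)/r⌋} with hBad1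
  have hBadMeas : ∀ i, MeasurableSet (Bad1 i) := fun i => measurable_bad _ _
  set BadPi : Fin d → Set (Fin d → ℝ) := fun i => (fun f : Fin d → ℝ => f i) ⁻¹' (Bad1 i) with hBadPi
  set BoxPi : Set (Fin d → ℝ) := Set.univ.pi (fun _ => Set.Ico (0:ℝ) r) with hBoxPi
  have hBadPiMeas : ∀ i, MeasurableSet (BadPi i) :=
    fun i => (measurable_pi_apply i) (hBadMeas i)
  have hBoxMeas : MeasurableSet BoxPi :=
    MeasurableSet.univ_pi (fun _ => measurableSet_Ico)
  -- rewrite LHS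
  rw [Measure.smul_apply, smul_eq_mul]
  have hseteq : {t : EuclideanSpace ℝ (Fin d) | ∃ i, ⌊(p i - t i) / r⌋ ≠ ⌊(q i - t i) / r⌋}
      = (MeasurableEquiv.toLp 2 (Fin d → ℝ)).symm ⁻¹' (⋃ i, BadPi i) := by
    ext t
    simp only [Set.mem_setOf_eq, Set.mem_preimage, Set.mem_iUnion, hBadPi, hBad1]
    rfl
  have hsetmeas : MeasurableSet
      {t : EuclideanSpace ℝ (Fin d) | ∃ i, ⌊(p i - t i) / r⌋ ≠ ⌊(q i - t i) / r⌋} := by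
    rw [hseteq]
    exact (MeasurableEquiv.toLp 2 (Fin d → ℝ)).symm.measurable (MeasurableSet.iUnion hBadPiMeas)
  rw [Measure.restrict_apply hsetmeas]
  -- transfer to pi space
  have htrans : volume ({t : EuclideanSpace ℝ (Fin d) | ∃ i, ⌊(p i - t i) / r⌋ ≠ ⌊(q i - t i) / r⌋}
        ∩ {t : EuclideanSpace ℝ (Fin d) | ∀ i, t i ∈ Set.Ico (0 : ℝ) r})
      = volume ((⋃ i, BadPi i) ∩ BoxPi) := by
    have h := (EuclideanSpace.volume_preserving_symm_measurableEquiv_toLp (Fin d)).measure_preimage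
      (s := (⋃ i, BadPi i) ∩ BoxPi)
      (((MeasurableSet.iUnion hBadPiMeas).inter hBoxMeas).nullMeasurableSet)
    convert h using 2
    ext t
    simp only [Set.mem_inter_iff, Set.mem_setOf_eq, Set.mem_preimage, Set.mem_iUnion,
      Set.mem_pi, Set.mem_univ, true_implies, hBadPi, hBoxPi, hBad1]
    rfl
  rw [htrans]
  -- union bound
  have hub : volume ((⋃ i, BadPi i) ∩ BoxPi) ≤ ∑ i, volume (BadPi i ∩ BoxPi) := by
    rw [Set.iUnion_inter]
    exact (measure_iUnion_le _).trans_eq (tsum_fintype _)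
  -- each term
  have hterm : ∀ i, volume (BadPi i ∩ BoxPi)
      ≤ ENNReal.ofReal (|p i - q i| * r ^ (d - 1)) := by
    intro i
    have hset : BadPi i ∩ BoxPi
        = Set.univ.pi (fun j => if j = i then Bad1 i ∩ Set.Ico 0 r else Set.Ico (0:ℝ) r) := by
      ext f
      simp only [Set.mem_inter_iff, Set.mem_preimage, Set.mem_pi, Set.mem_univ, true_implies,
        hBadPi, hBoxPi]
      constructor
      · rintro ⟨hb, hbox⟩ j
        by_cases hj : j = i
        · subst hj; simp only [if_pos rfl]; exact ⟨hb, hbox j⟩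
        · simp only [if_neg hj]; exact hbox j
      · intro h
        have hi := h i
        rw [if_pos rfl] at hi
        refine ⟨hi.1, fun j => ?_⟩
        by_cases hj : j = i
        · subst hj; exact hi.2
        · have := h j; rwa [if_neg hj] at this
    rw [hset, volume_pi_pi]
    have hprod : ∏ j, volume (if j = i then Bad1 i ∩ Set.Ico 0 r else Set.Ico (0:ℝ) r)
        = volume (Bad1 i ∩ Set.Ico 0 r) * (ENNReal.ofReal r) ^ (d - 1) := by
      rw [← Finset.mul_prod_erase Finset.univ _ (Finset.mem_univ i)]
      congr 1
      · rw [if_pos rfl]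
      · calc ∏ j ∈ Finset.univ.erase i,
              volume (if j = i then Bad1 i ∩ Set.Ico 0 r else Set.Ico (0:ℝ) r)
            = ∏ _j ∈ Finset.univ.erase i, volume (Set.Ico (0:ℝ) r) :=
              Finset.prod_congr rfl (fun j hj => by
                rw [if_neg (Finset.ne_of_mem_erase hj)])
          _ = (ENNReal.ofReal r) ^ (d - 1) := by
              rw [Finset.prod_const, Real.volume_Ico, sub_zero, Finset.card_erase_of_mem
                (Finset.mem_univ i), Finset.card_univ, Fintype.card_fin]
    rw [hprod]
    calc volume (Bad1 i ∩ Set.Ico 0 r) * (ENNReal.ofReal r) ^ (d-1)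
        ≤ ENNReal.ofReal |p i - q i| * (ENNReal.ofReal r) ^ (d-1) := by
          gcongr; exact oneD' hr _ _
      _ = ENNReal.ofReal (|p i - q i| * r ^ (d-1)) := by
          rw [← ENNReal.ofReal_pow hr.le, ← ENNReal.ofReal_mul (abs_nonneg _)]
  -- sum up
  have hsum : ∑ i, volume (BadPi i ∩ BoxPi)
      ≤ ENNReal.ofReal ((∑ i, |p i - q i|) * r ^ (d-1)) := by
    rw [Finset.sum_mul, ENNReal.ofReal_sum_of_nonneg
      (fun i _ => mul_nonneg (abs_nonneg _) (pow_nonneg hr.le _))]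
    exact Finset.sum_le_sum (fun i _ => hterm i)
  -- Cauchy-Schwarz
  have hCS : ∑ i, |p i - q i| ≤ Real.sqrt d * ‖p - q‖ := by
    have h1 : (∑ i, |p i - q i|) ^ 2 ≤ (∑ _i : Fin d, (1:ℝ)^2) * ∑ i, |p i - q i| ^ 2 := by
      have := Finset.sum_mul_sq_le_sq_mul_sq Finset.univ (fun _ : Fin d => (1:ℝ))
        (fun i => |p i - q i|)
      simpa using this
    have h2 : ‖p - q‖ = Real.sqrt (∑ i, |p i - q i| ^ 2) := by
      rw [EuclideanSpace.norm_eq]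
      congr 1
    have h3 : 0 ≤ ∑ i, |p i - q i| := Finset.sum_nonneg (fun i _ => abs_nonneg _)
    have h4 : Real.sqrt ((∑ i, |p i - q i|)^2) ≤ Real.sqrt ((d : ℝ) * ∑ i, |p i - q i| ^ 2) := by
      apply Real.sqrt_le_sqrt
      simpa using h1
    rw [Real.sqrt_sq h3] at h4
    rw [Real.sqrt_mul (Nat.cast_nonneg d)] at h4
    rw [h2]
    exact h4
  -- finish
  calc (ENNReal.ofReal (r^d))⁻¹ * volume ((⋃ i, BadPi i) ∩ BoxPi)
      ≤ (ENNReal.ofReal (r^d))⁻¹ * ENNReal.ofReal ((∑ i, |p i - q i|) * r ^ (d-1)) := by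
        gcongr
        exact hub.trans hsum
    _ = ENNReal.ofReal ((∑ i, |p i - q i|) * r ^ (d-1)) / ENNReal.ofReal (r^d) := by
        rw [ENNReal.div_eq_inv_mul]
    _ = ENNReal.ofReal ((∑ i, |p i - q i|) * r ^ (d-1) / r ^ d) := by
        rw [ENNReal.ofReal_div_of_pos (pow_pos hr d)]
    _ ≤ ENNReal.ofReal (Real.sqrt d * ‖p - q‖ / r) := by
        apply ENNReal.ofReal_le_ofReal
        have hd1 : r ^ d = r ^ (d-1) * r := by
          rw [← pow_succ]
          congr 1
          omega
        rw [hd1]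
        rw [div_le_div_iff₀ (by positivity) hr]
        have h3 : 0 ≤ (Real.sqrt d * ‖p - q‖) := by positivity
        calc (∑ i, |p i - q i|) * r ^ (d-1) * r ≤ (Real.sqrt d * ‖p - q‖) * r^(d-1) * r := by
              gcongr
          _ = Real.sqrt d * ‖p - q‖ * (r ^ (d-1) * r) := by ring
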